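/- Every shortened array code with modulus q, column-weight r ≥ 2, girth at least eight, and s ≥ 1 retained block-columns in its parity-check matrix satisfies s ≤ 1 + (q−1)/(r−1). -/

import Mathlib

/-- The Tanner graph of a (possibly shortened) array code with modulus `q`,
block-row labels `a 0, …, a (r-1)` (elements of `ZMod q`), and retained
block-column label set `S ⊆ ZMod q`.  Row vertices are pairs `(i, x)`
(block-row `i`, row `x` within the block); column vertices are pairs `(j, y)`
with `j ∈ S` (block-column labeled `j`, column `y` within the block).
A row `(i, x)` is adjacent to a column `(j, y)` iff the corresponding entry of
the parity-check matrix, i.e. entry `(x, y)` of `P ^ (a i * j)`, equals `1`,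
which happens iff `y = x + a i * j`. -/
def tannerGraph (q r : ℕ) (a : Fin r → ZMod q) (S : Finset (ZMod q)) :
    SimpleGraph ((Fin r × ZMod q) ⊕ ({j // j ∈ S} × ZMod q)) where
  Adj u v :=
    match u, v with
    | Sum.inl (i, x), Sum.inr (j, y) => y = x + a i * (j : ZMod q)
    | Sum.inr (j, y), Sum.inl (i, x) => y = x + a i * (j : ZMod q)
    | _, _ => False
  symm := by
    constructor
    rintro (⟨i, x⟩ | ⟨j, y⟩) (⟨i', x'⟩ | ⟨j', y'⟩) h <;> simp_all
  loopless := by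
    constructor
    rintro (⟨i, x⟩ | ⟨j, y⟩) h <;> simp_all

lemma tanner_adj (q r : ℕ) (a : Fin r → ZMod q) (S : Finset (ZMod q))
    (i : Fin r) (x : ZMod q) (j : {j // j ∈ S}) (y : ZMod q) :
    (tannerGraph q r a S).Adj (Sum.inl (i, x)) (Sum.inr (j, y)) ↔ y = x + a i * (j : ZMod q) :=
  Iff.rfl

lemma tanner_adj' (q r : ℕ) (a : Fin r → ZMod q) (S : Finset (ZMod q))
    (i : Fin r) (x : ZMod q) (j : {j // j ∈ S}) (y : ZMod q) :
    (tannerGraph q r a S).Adj (Sum.inr (j, y)) (Sum.inl (i, x)) ↔ y = x + a i * (j : ZMod q) :=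
  Iff.rfl

lemma no_six_cycle (q r : ℕ) (a : Fin r → ZMod q)
    (S : Finset (ZMod q)) (hgirth : 8 ≤ (tannerGraph q r a S).egirth)
    (i i' i0 : Fin r) (hii' : i ≠ i') (hii0 : i ≠ i0) (hi'i0 : i' ≠ i0)
    (j j' j0 : ZMod q) (hj : j ∈ S) (hj' : j' ∈ S) (hj0 : j0 ∈ S)
    (hjj' : j ≠ j') (hjj0 : j ≠ j0) (hj'j0 : j' ≠ j0)
    (heq : a i * (j - j0) + a i0 * (j' - j) + a i' * (j0 - j') = 0) : False := by
  have hi'i : i' ≠ i := hii'.symm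
  have hi0i : i0 ≠ i := hii0.symm
  have hi0i' : i0 ≠ i' := hi'i0.symm
  have hj'j : j' ≠ j := hjj'.symm
  have hj0j : j0 ≠ j := hjj0.symm
  have hj0j' : j0 ≠ j' := hj'j0.symm
  set G := tannerGraph q r a S with hG
  have h1 : G.Adj (Sum.inl (i, (0 : ZMod q))) (Sum.inr (⟨j, hj⟩, a i * j)) := by
    rw [hG, tanner_adj]; try ring
  have h2 : G.Adj (Sum.inr (⟨j, hj⟩, a i * j)) (Sum.inl (i0, a i * j - a i0 * j)) := by
    rw [hG, tanner_adj']; try ring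
  have h3 : G.Adj (Sum.inl (i0, a i * j - a i0 * j))
      (Sum.inr (⟨j', hj'⟩, a i * j - a i0 * j + a i0 * j')) := by
    rw [hG, tanner_adj]; try ring
  have h4 : G.Adj (Sum.inr (⟨j', hj'⟩, a i * j - a i0 * j + a i0 * j'))
      (Sum.inl (i', a i * j - a i0 * j + a i0 * j' - a i' * j')) := by
    rw [hG, tanner_adj']; try ring
  have h5 : G.Adj (Sum.inl (i', a i * j - a i0 * j + a i0 * j' - a i' * j'))
      (Sum.inr (⟨j0, hj0⟩, a i * j - a i0 * j + a i0 * j' - a i' * j' + a i' * j0)) := by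
    rw [hG, tanner_adj]; try ring
  have h6 : G.Adj (Sum.inr (⟨j0, hj0⟩, a i * j - a i0 * j + a i0 * j' - a i' * j' + a i' * j0))
      (Sum.inl (i, (0 : ZMod q))) := by
    rw [hG, tanner_adj']
    show _ = (0 : ZMod q) + a i * j0
    linear_combination heq
  let w : G.Walk (Sum.inl (i, (0 : ZMod q))) (Sum.inl (i, (0 : ZMod q))) :=
    .cons h1 (.cons h2 (.cons h3 (.cons h4 (.cons h5 (.cons h6 .nil)))))
  have hcyc : w.IsCycle := by
    rw [SimpleGraph.Walk.isCycle_def]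
    refine ⟨⟨?_⟩, by simp [w], ?_⟩
    · simp [w, Sym2.eq, Sym2.rel_iff', Prod.ext_iff, hii', hii0, hi'i0, hi'i, hi0i, hi0i',
        hjj', hjj0, hj'j0, hj'j, hj0j, hj0j']
    · simp [w, Prod.ext_iff, hii', hii0, hi'i0, hi'i, hi0i, hi0i',
        hjj', hjj0, hj'j0, hj'j, hj0j, hj0j']
  have h8 := SimpleGraph.le_egirth.mp hgirth _ w hcyc
  have hw : w.length = 6 := rfl
  rw [hw] at h8
  norm_num at h8

/-- Every shortened array code with modulus `q` (an odd prime),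
column-weight `r ≥ 2` (distinct block-row labels), girth at least eight and
`s ≥ 1` retained block-columns satisfies `s ≤ 1 + (q - 1)/(r - 1)`. -/
theorem arrayCode_girth_eight_moore_bound (q r : ℕ) (hq : q.Prime) (hqodd : Odd q)
    (hr : 2 ≤ r) (a : Fin r → ZMod q) (ha : Function.Injective a)
    (S : Finset (ZMod q)) (hS : 1 ≤ S.card)
    (hgirth : 8 ≤ (tannerGraph q r a S).egirth) :
    (S.card : ℝ) ≤ 1 + ((q : ℝ) - 1) / ((r : ℝ) - 1) := by
  haveI : Fact q.Prime := ⟨hq⟩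
  obtain ⟨j0, hj0⟩ := Finset.card_pos.mp hS
  have hrpos : 0 < r := by omega
  set i0 : Fin r := ⟨0, hrpos⟩ with hi0
  -- the key injection
  set T : Finset (ZMod q × Fin r) :=
    (S.erase j0) ×ˢ ((Finset.univ : Finset (Fin r)).erase i0) with hT
  have hmaps : ∀ p ∈ T, (a p.2 - a i0) * (p.1 - j0) ∈ (Finset.univ : Finset (ZMod q)).erase 0 := by
    rintro ⟨j, i⟩ hp
    simp only [hT, Finset.mem_product, Finset.mem_erase] at hp
    obtain ⟨⟨hjne, hjS⟩, hine, -⟩ := hp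
    refine Finset.mem_erase.mpr ⟨?_, Finset.mem_univ _⟩
    exact mul_ne_zero (sub_ne_zero.mpr fun h => hine (ha h)) (sub_ne_zero.mpr hjne)
  have hinj : Set.InjOn (fun p : ZMod q × Fin r => (a p.2 - a i0) * (p.1 - j0)) T := by
    rintro ⟨j, i⟩ hp ⟨j'', i''⟩ hp' hEq
    simp only [hT, Finset.coe_product, Set.mem_prod, Finset.mem_coe, Finset.mem_erase] at hp hp'
    obtain ⟨⟨hjne, hjS⟩, hine, -⟩ := hp
    obtain ⟨⟨hj''ne, hj''S⟩, hi''ne, -⟩ := hp'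
    simp only at hEq
    by_cases hii : i = i''
    · subst hii
      have : j = j'' := by
        have h2 : (a i - a i0) * (j - j'') = 0 := by linear_combination hEq
        rcases mul_eq_zero.mp h2 with h | h
        · exact absurd (ha (sub_eq_zero.mp h)) hine
        · exact sub_eq_zero.mp h
      simp [this]
    · by_cases hjj : j = j''
      · subst hjj
        exfalso
        have h2 : (a i - a i'') * (j - j0) = 0 := by linear_combination hEq
        rcases mul_eq_zero.mp h2 with h | h
        · exact hii (ha (sub_eq_zero.mp h))
        · exact hjne (sub_eq_zero.mp h)
      · exfalso
        refine no_six_cycle q r a S hgirth i i'' i0 hii hine hi''ne j j'' j0 hjS hj''S hj0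
          hjj hjne hj''ne ?_
        linear_combination hEq
  have hcard : T.card ≤ ((Finset.univ : Finset (ZMod q)).erase 0).card :=
    Finset.card_le_card_of_injOn _ hmaps hinj
  have hTcard : T.card = (S.card - 1) * (r - 1) := by
    rw [hT, Finset.card_product, Finset.card_erase_of_mem hj0,
      Finset.card_erase_of_mem (Finset.mem_univ _), Finset.card_univ, Fintype.card_fin]
  have hqcard : ((Finset.univ : Finset (ZMod q)).erase 0).card = q - 1 := by
    rw [Finset.card_erase_of_mem (Finset.mem_univ _), Finset.card_univ, ZMod.card]
  rw [hTcard, hqcard] at hcard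
  -- now pure arithmetic
  have hq3 : 3 ≤ q := by
    obtain ⟨k, hk⟩ := hqodd
    have := hq.two_le
    omega
  have hr1 : (0 : ℝ) < (r : ℝ) - 1 := by
    have : (2 : ℝ) ≤ (r : ℝ) := by exact_mod_cast hr
    linarith
  have h1 : ((S.card : ℝ) - 1) * ((r : ℝ) - 1) ≤ (q : ℝ) - 1 := by
    have := (Nat.cast_le (α := ℝ)).mpr hcard
    push_cast [Nat.cast_sub hS, Nat.cast_sub (by omega : 1 ≤ r),
      Nat.cast_sub (by omega : 1 ≤ q)] at this
    linarith
  rw [← sub_le_iff_le_add', le_div_iff₀ hr1]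
  exact h1
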